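/- Let D* be a positive real, and let H be a connected graph on n vertices such that e_H(S) ≤ D*·|S| for every vertex set S. Define π(S) = (2·e_H(S) + |∂_H S|)/(2·e(H)). Then every vertex set S that is connected in H and satisfies π(S) ≤ 1/2 has |S| ≤ (D*·n + 1)/(D* + 1). -/

import Mathlib

/-- `edgeBdry H S` is the set of edges of `H` with exactly one endpoint in `S`. -/
def edgeBdry {V : Type*} (H : SimpleGraph V) (S : Set V) : Set (Sym2 V) :=
  {e | e ∈ H.edgeSet ∧ ∃ u v, e = s(u, v) ∧ u ∈ S ∧ v ∉ S}

/-- `eIn H S` is the number of edges of `H` with both endpoints in `S`. -/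
noncomputable def eIn {V : Type*} (H : SimpleGraph V) (S : Set V) : ℕ :=
  {e ∈ H.edgeSet | ∀ v ∈ e, v ∈ S}.ncard

/-- `piWeight H S = π(S) = (2 e_H(S) + |∂_H S|) / (2 e(H))`. -/
noncomputable def piWeight {V : Type*} (H : SimpleGraph V) (S : Set V) : ℝ :=
  (2 * eIn H S + (edgeBdry H S).ncard) / (2 * H.edgeSet.ncard)

lemma aux_conn_card {W : Type*} [Fintype W] (G : SimpleGraph W) (h : G.Connected) :
    Fintype.card W ≤ G.edgeSet.ncard + 1 := by
  classical
  obtain ⟨r⟩ := h.nonempty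
  have key : ∀ v : W, v ≠ r → ∃ u, G.Adj v u ∧ G.dist u r + 1 = G.dist v r := by
    intro v hv
    obtain ⟨p, hp⟩ := (h v r).exists_walk_length_eq_dist
    cases p with
    | nil => exact absurd rfl hv
    | cons hadj q =>
      rename_i u
      refine ⟨u, hadj, ?_⟩
      simp only [SimpleGraph.Walk.length_cons] at hp
      have h1 : G.dist u r ≤ q.length := SimpleGraph.dist_le q
      have h2 : G.dist v r ≤ G.dist u r + 1 := by
        calc G.dist v r ≤ G.dist v u + G.dist u r := h.dist_triangle
          _ ≤ 1 + G.dist u r := by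
              have hvu : G.dist v u ≤ 1 := by
                simpa using SimpleGraph.dist_le (SimpleGraph.Walk.cons hadj SimpleGraph.Walk.nil)
              omega
          _ = G.dist u r + 1 := by omega
      omega
  choose u hadj hdist using key
  have hinj : Function.Injective (fun v : {v : W // v ≠ r} =>
      (⟨s(v.1, u v.1 v.2), hadj v.1 v.2⟩ : G.edgeSet)) := by
    intro ⟨a, ha⟩ ⟨b, hb⟩ hab
    simp only [Subtype.mk.injEq, Subtype.ext_iff, Sym2.eq_iff, Sym2.eq, Sym2.rel_iff', Prod.mk.injEq, Prod.swap_prod_mk]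
      at hab
    rcases hab with ⟨h1, h2⟩ | ⟨h1, h2⟩
    · exact Subtype.ext h1
    · exfalso
      have d1 := hdist a ha
      have d2 := hdist b hb
      rw [h2] at d1
      rw [← h1] at d2
      omega
  have hcard : Nat.card {v : W // v ≠ r} ≤ Nat.card G.edgeSet :=
    Nat.card_le_card_of_injective _ hinj
  rw [Nat.card_eq_fintype_card, Nat.card_coe_set_eq] at hcard
  have : Fintype.card {v : W // v ≠ r} = Fintype.card W - 1 := by
    simp [Fintype.card_subtype_compl, Fintype.card_subtype_eq]
  have hpos : 0 < Fintype.card W := Fintype.card_pos_iff.mpr ⟨r⟩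
  omega

lemma eIn_eq_induce {V : Type*} (H : SimpleGraph V) (S : Set V) :
    eIn H S = (H.induce S).edgeSet.ncard := by
  have himg : {e ∈ H.edgeSet | ∀ v ∈ e, v ∈ S}
      = Sym2.map (Subtype.val : S → V) '' (H.induce S).edgeSet := by
    ext e
    constructor
    · rintro ⟨he, hall⟩
      induction e with
      | _ x y =>
        rw [SimpleGraph.mem_edgeSet] at he
        have hx : x ∈ S := hall x (Sym2.mem_mk_left x y)
        have hy : y ∈ S := hall y (Sym2.mem_mk_right x y)
        exact ⟨s(⟨x, hx⟩, ⟨y, hy⟩), by simpa [SimpleGraph.mem_edgeSet] using he, rfl⟩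
    · rintro ⟨e', he', rfl⟩
      induction e' with
      | _ a b =>
        rw [SimpleGraph.mem_edgeSet] at he'
        refine ⟨by simpa [SimpleGraph.mem_edgeSet] using he', ?_⟩
        intro v hv
        simp only [Sym2.map_pair_eq, Sym2.mem_iff] at hv
        rcases hv with rfl | rfl
        · exact a.2
        · exact b.2
  rw [eIn, himg, Set.ncard_image_of_injective _ (Sym2.map.injective Subtype.val_injective)]

lemma edge_partition {V : Type*} [Fintype V] (H : SimpleGraph V) (S : Set V) :
    H.edgeSet.ncard = eIn H S + eIn H Sᶜ + (edgeBdry H S).ncard := by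
  classical
  set A := {e ∈ H.edgeSet | ∀ v ∈ e, v ∈ S} with hA
  set B := {e ∈ H.edgeSet | ∀ v ∈ e, v ∈ Sᶜ} with hB
  set C := edgeBdry H S with hC
  have hunion : H.edgeSet = (A ∪ B) ∪ C := by
    ext e
    induction e with
    | _ x y =>
      constructor
      · intro he
        rw [SimpleGraph.mem_edgeSet] at he
        by_cases hx : x ∈ S <;> by_cases hy : y ∈ S
        · left; left
          refine ⟨H.mem_edgeSet.mpr he, fun v hv => ?_⟩
          rcases Sym2.mem_iff.mp hv with rfl | rfl <;> assumption
        · right; exact ⟨H.mem_edgeSet.mpr he, x, y, rfl, hx, hy⟩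
        · right
          refine ⟨H.mem_edgeSet.mpr he, y, x, Sym2.eq_swap, hy, hx⟩
        · left; right
          refine ⟨H.mem_edgeSet.mpr he, ?_⟩
          intro v hv
          rcases Sym2.mem_iff.mp hv with rfl | rfl <;> assumption
      · rintro ((⟨he, -⟩ | ⟨he, -⟩) | ⟨he, -⟩) <;> exact he
  have hABC : Disjoint (A ∪ B) C := by
    rw [Set.disjoint_left]
    rintro e (⟨-, hall⟩ | ⟨-, hall⟩) ⟨-, u, v, rfl, hu, hv⟩
    · exact hv (hall v (Sym2.mem_mk_right u v))
    · exact (hall u (Sym2.mem_mk_left u v)) hu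
  have hAB : Disjoint A B := by
    rw [Set.disjoint_left]
    rintro e ⟨he, hall⟩ ⟨-, hall'⟩
    induction e with
    | _ x y =>
      exact hall' x (Sym2.mem_mk_left x y) (hall x (Sym2.mem_mk_left x y))
  rw [hunion, Set.ncard_union_eq hABC (Set.toFinite _) (Set.toFinite _),
    Set.ncard_union_eq hAB (Set.toFinite _) (Set.toFinite _)]
  rfl

/-- Claim: in a connected `n`-vertex graph `H` with `e_H(S) ≤ D*·|S|` for every vertex set
`S`, every connected vertex set `S` with `π(S) ≤ 1/2` has `|S| ≤ (D*·n + 1)/(D* + 1)`. -/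
theorem connected_set_small_of_piWeight_le_half {V : Type*} [Fintype V] (n : ℕ)
    (hn : Fintype.card V = n) (Dstar : ℝ) (hD : 0 < Dstar)
    (H : SimpleGraph V) (hconn : H.Connected)
    (hsparse : ∀ S : Set V, (eIn H S : ℝ) ≤ Dstar * S.ncard) :
    ∀ S : Set V, (H.induce S).Connected → piWeight H S ≤ 1 / 2 →
      (S.ncard : ℝ) ≤ (Dstar * n + 1) / (Dstar + 1) := by
  classical
  intro S hSconn hpi
  have hD1 : (0:ℝ) < Dstar + 1 := by linarith
  have hSne : Nonempty S := hSconn.nonempty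
  -- |S| ≤ eIn H S + 1
  have hcount : S.ncard ≤ eIn H S + 1 := by
    have := aux_conn_card (H.induce S) hSconn
    rwa [eIn_eq_induce, ← Nat.card_coe_set_eq, Nat.card_eq_fintype_card]
  have hcompl : S.ncard + Sᶜ.ncard = n := by
    rw [← hn, ← Nat.card_eq_fintype_card]
    exact Set.ncard_add_ncard_compl S
  have hn1 : 1 ≤ n := by
    have : 1 ≤ S.ncard := by
      rw [← Nat.card_coe_set_eq]
      exact Nat.one_le_iff_ne_zero.mpr (Nat.card_ne_zero.mpr ⟨hSne, Set.toFinite S⟩)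
    omega
  by_cases hm : H.edgeSet.ncard = 0
  · -- no edges: V is a subsingleton, so n = 1 and |S| = 1
    have hE : H.edgeSet = ∅ := (Set.ncard_eq_zero (Set.toFinite _)).mp hm
    have hsub : ∀ v w : V, v = w := by
      intro v w
      obtain ⟨p⟩ := hconn v w
      cases p with
      | nil => rfl
      | cons hadj q => exact absurd (H.mem_edgeSet.mpr hadj) (by simp [hE])
    have hnle : n ≤ 1 := by
      rw [← hn]
      exact Fintype.card_le_one_iff.mpr fun a b => hsub a b
    have hs1 : S.ncard ≤ 1 := by omega
    rw [le_div_iff₀ hD1]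
    have h1 : (S.ncard : ℝ) ≤ 1 := by exact_mod_cast hs1
    have h2 : (1:ℝ) ≤ (n:ℝ) := by exact_mod_cast hn1
    nlinarith
  · have hmpos : 0 < H.edgeSet.ncard := Nat.pos_of_ne_zero hm
    -- from π(S) ≤ 1/2 : 2 eIn S + bdry ≤ e(H)
    have hhalf : 2 * eIn H S + (edgeBdry H S).ncard ≤ H.edgeSet.ncard := by
      rw [piWeight, div_le_div_iff₀ (by positivity) two_pos] at hpi
      have : (2 * (eIn H S : ℝ) + (edgeBdry H S).ncard) ≤ H.edgeSet.ncard := by linarith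
      exact_mod_cast this
    have hab : eIn H S ≤ eIn H Sᶜ := by
      have := edge_partition H S
      omega
    -- assemble
    have hsp := hsparse Sᶜ
    have hsn : S.ncard ≤ n := by omega
    have hcomplR : (Sᶜ.ncard : ℝ) = (n : ℝ) - S.ncard := by
      have h := hcompl
      have : ((S.ncard + Sᶜ.ncard : ℕ) : ℝ) = (n : ℝ) := by exact_mod_cast congrArg (Nat.cast : ℕ → ℝ) h
      push_cast at this
      linarith
    have hchain : (S.ncard : ℝ) ≤ Dstar * ((n:ℝ) - S.ncard) + 1 := by
      have h1 : (S.ncard : ℝ) ≤ (eIn H S : ℝ) + 1 := by exact_mod_cast hcount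
      have h2 : (eIn H S : ℝ) ≤ (eIn H Sᶜ : ℝ) := by exact_mod_cast hab
      rw [hcomplR] at hsp
      linarith
    rw [le_div_iff₀ hD1]
    nlinarith
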